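/- arXiv:2005.13851 — 2 statements merged into one kernel-verified Lean document; each statement's English description precedes it below -/
import Mathlib

section
/- Let $(I_j)_{j=j_0}^N$ and $(M_j)_{j=j_0}^N$ be nonnegative reals with $\sum_j I_j^2 \le \delta_0^2$, $M_{j_0} \le \delta_0 2^{j_0}$, and $M_j \le M_{j_0} + \sum_{k=j_0}^{j} 2^{k}(I_{k-1}+I_k+I_{k+1})$ for all $j$ (with $I_{j_0-1}=I_{N+1}=0$). Then there is an absolute constant $C>0$ such that $\sum_{j=j_0}^{N} 2^{-2j} M_j^2 \le C \delta_0^2$. -/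
private lemma geom_tail_le {r : ℝ} (h0 : 0 ≤ r) (h1 : r < 1) (k N : ℕ) :
    ∑ j ∈ Finset.Icc k N, r ^ j ≤ r ^ k / (1 - r) := by
  rw [← Finset.Ico_add_one_right_eq_Icc]
  exact geom_sum_Ico_le_of_lt_one h0 h1

/-- Discrete core of part (c) of the Small Norm on Expanding Annuli lemma. -/
theorem stmt_1 :
    ∃ C : ℝ, 0 < C ∧
      ∀ (j0 N : ℕ) (δ0 : ℝ) (I M : ℕ → ℝ),
        j0 ≤ N →
        (∀ j, 0 ≤ I j) → (∀ j, 0 ≤ M j) → 0 ≤ δ0 →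
        (∀ j, j < j0 ∨ N < j → I j = 0) →
        (∑ j ∈ Finset.Icc j0 N, (I j) ^ 2) ≤ δ0 ^ 2 →
        M j0 ≤ δ0 * 2 ^ j0 →
        (∀ j, j0 ≤ j → j ≤ N →
          M j ≤ M j0 + ∑ k ∈ Finset.Icc j0 j, 2 ^ k * (I (k - 1) + I k + I (k + 1))) →
        (∑ j ∈ Finset.Icc j0 N, ((2 : ℝ) ^ (2 * j))⁻¹ * (M j) ^ 2) ≤ C * δ0 ^ 2 := by
  refine ⟨100, by norm_num, ?_⟩
  intro j0 N δ0 I M hj0N hInn hMnn hδ0 hIz hIsum hMj0 hrec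
  set J : ℕ → ℝ := fun k => I (k - 1) + I k + I (k + 1) with hJdef
  have hJnn : ∀ k, 0 ≤ J k := by
    intro k
    have h1 := hInn (k - 1); have h2 := hInn k; have h3 := hInn (k + 1)
    simp only [hJdef]; linarith
  -- extending the sum of I^2 to ranges
  have hext : ∀ n, N < n →
      ∑ k ∈ Finset.range n, I k ^ 2 = ∑ k ∈ Finset.Icc j0 N, I k ^ 2 := by
    intro n hn
    refine (Finset.sum_subset ?_ ?_).symm
    · intro k hk; simp only [Finset.mem_Icc] at hk; simp only [Finset.mem_range]; omega
    · intro k hk hk'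
      simp only [Finset.mem_Icc, not_and, not_le] at hk'
      have hz : I k = 0 := by
        rcases lt_or_ge k j0 with h | h
        · exact hIz k (Or.inl h)
        · exact hIz k (Or.inr (hk' h))
      simp [hz]
  have hI0sq : I 0 ^ 2 ≤ δ0 ^ 2 := by
    rcases Nat.eq_zero_or_pos j0 with h | h
    · subst h
      refine le_trans (Finset.single_le_sum (f := fun k => I k ^ 2)
        (fun i _ => sq_nonneg _) ?_) hIsum
      simp
    · have hz : I 0 = 0 := hIz 0 (Or.inl h)
      rw [hz]
      simpa using sq_nonneg δ0
  have hI1 : ∑ k ∈ Finset.Icc j0 N, I (k - 1) ^ 2 ≤ 2 * δ0 ^ 2 := by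
    have hsub : ∑ k ∈ Finset.Icc j0 N, I (k - 1) ^ 2
        ≤ ∑ k ∈ Finset.range (N + 2), I (k - 1) ^ 2 := by
      apply Finset.sum_le_sum_of_subset_of_nonneg
      · intro k hk; simp only [Finset.mem_Icc] at hk; simp only [Finset.mem_range]; omega
      · intros; positivity
    have hshift : ∑ k ∈ Finset.range (N + 2), I (k - 1) ^ 2
        = (∑ k ∈ Finset.range (N + 1), I k ^ 2) + I 0 ^ 2 := by
      rw [Finset.sum_range_succ' (fun k => I (k - 1) ^ 2) (N + 1)]
      simp
    rw [hshift, hext (N + 1) (by omega)] at hsub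
    linarith
  have hI2 : ∑ k ∈ Finset.Icc j0 N, I (k + 1) ^ 2 ≤ δ0 ^ 2 := by
    have hsub : ∑ k ∈ Finset.Icc j0 N, I (k + 1) ^ 2
        ≤ ∑ k ∈ Finset.range (N + 2), I (k + 1) ^ 2 := by
      apply Finset.sum_le_sum_of_subset_of_nonneg
      · intro k hk; simp only [Finset.mem_Icc] at hk; simp only [Finset.mem_range]; omega
      · intros; positivity
    have hsh : ∑ k ∈ Finset.range (N + 3), I k ^ 2
        = (∑ k ∈ Finset.range (N + 2), I (k + 1) ^ 2) + I 0 ^ 2 := by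
      rw [Finset.sum_range_succ' (fun k => I k ^ 2) (N + 2)]
    rw [hext (N + 3) (by omega)] at hsh
    have h0 := sq_nonneg (I 0)
    linarith
  have hJsq : ∑ k ∈ Finset.Icc j0 N, J k ^ 2 ≤ 12 * δ0 ^ 2 := by
    have hpt : ∀ k ∈ Finset.Icc j0 N,
        J k ^ 2 ≤ 3 * (I (k - 1) ^ 2 + I k ^ 2 + I (k + 1) ^ 2) := by
      intro k _
      simp only [hJdef]
      nlinarith [sq_nonneg (I (k-1) - I k), sq_nonneg (I k - I (k+1)), sq_nonneg (I (k-1) - I (k+1))]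
    have h := Finset.sum_le_sum hpt
    have hsplit : ∑ k ∈ Finset.Icc j0 N, 3 * (I (k - 1) ^ 2 + I k ^ 2 + I (k + 1) ^ 2)
        = 3 * ((∑ k ∈ Finset.Icc j0 N, I (k - 1) ^ 2) + (∑ k ∈ Finset.Icc j0 N, I k ^ 2)
          + (∑ k ∈ Finset.Icc j0 N, I (k + 1) ^ 2)) := by
      rw [← Finset.sum_add_distrib, ← Finset.sum_add_distrib, Finset.mul_sum]
    rw [hsplit] at h
    linarith
  -- the partial weighted sums of J^2
  set T : ℕ → ℝ := fun j => ∑ k ∈ Finset.Icc j0 j, (2 : ℝ) ^ k * J k ^ 2 with hTdef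
  have hTnn : ∀ j, 0 ≤ T j := by
    intro j
    refine Finset.sum_nonneg fun k _ => mul_nonneg (by positivity) (sq_nonneg _)
  -- Cauchy-Schwarz step
  have hCS : ∀ j : ℕ, (∑ k ∈ Finset.Icc j0 j, (2 : ℝ) ^ k * J k) ^ 2
      ≤ 2 ^ (j + 1) * T j := by
    intro j
    have key := Finset.sum_mul_sq_le_sq_mul_sq (Finset.Icc j0 j)
      (fun k => Real.sqrt ((2 : ℝ) ^ k)) (fun k => Real.sqrt ((2 : ℝ) ^ k) * J k)
    have e1 : ∀ k : ℕ, Real.sqrt ((2 : ℝ) ^ k) * (Real.sqrt ((2 : ℝ) ^ k) * J k)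
        = (2 : ℝ) ^ k * J k := by
      intro k
      rw [← mul_assoc, Real.mul_self_sqrt (by positivity)]
    have e2 : ∀ k : ℕ, Real.sqrt ((2 : ℝ) ^ k) ^ 2 = (2 : ℝ) ^ k := by
      intro k; exact Real.sq_sqrt (by positivity)
    have e3 : ∀ k : ℕ, (Real.sqrt ((2 : ℝ) ^ k) * J k) ^ 2 = (2 : ℝ) ^ k * J k ^ 2 := by
      intro k; rw [mul_pow, e2]
    simp only [e1, e2, e3] at key
    refine le_trans key ?_
    have hgeo : ∑ k ∈ Finset.Icc j0 j, (2 : ℝ) ^ k ≤ 2 ^ (j + 1) := by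
      have hsub : ∑ k ∈ Finset.Icc j0 j, (2 : ℝ) ^ k
          ≤ ∑ k ∈ Finset.range (j + 1), (2 : ℝ) ^ k := by
        apply Finset.sum_le_sum_of_subset_of_nonneg
        · intro k hk; simp only [Finset.mem_Icc] at hk; simp only [Finset.mem_range]; omega
        · intros; positivity
      have : ∑ k ∈ Finset.range (j + 1), (2 : ℝ) ^ k = 2 ^ (j + 1) - 1 := by
        rw [geom_sum_eq (by norm_num : (2 : ℝ) ≠ 1)]
        norm_num
      rw [this] at hsub
      linarith
    exact mul_le_mul_of_nonneg_right hgeo (hTnn j)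
  -- pointwise bound for M j ^ 2
  have hMsq : ∀ j ∈ Finset.Icc j0 N, M j ^ 2 ≤ 2 * M j0 ^ 2 + 2 ^ (j + 2) * T j := by
    intro j hj
    simp only [Finset.mem_Icc] at hj
    have hMle : M j ≤ M j0 + ∑ k ∈ Finset.Icc j0 j, (2 : ℝ) ^ k * J k := hrec j hj.1 hj.2
    have hSnn : 0 ≤ ∑ k ∈ Finset.Icc j0 j, (2 : ℝ) ^ k * J k :=
      Finset.sum_nonneg fun k _ => mul_nonneg (by positivity) (hJnn k)
    have h1 : M j ^ 2 ≤ (M j0 + ∑ k ∈ Finset.Icc j0 j, (2 : ℝ) ^ k * J k) ^ 2 := by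
      have := hMnn j
      nlinarith
    have h2 : (M j0 + ∑ k ∈ Finset.Icc j0 j, (2 : ℝ) ^ k * J k) ^ 2
        ≤ 2 * M j0 ^ 2 + 2 * (∑ k ∈ Finset.Icc j0 j, (2 : ℝ) ^ k * J k) ^ 2 := by
      nlinarith [sq_nonneg (M j0 - ∑ k ∈ Finset.Icc j0 j, (2 : ℝ) ^ k * J k)]
    have h3 := hCS j
    have hp : (2 : ℝ) ^ (j + 2) = 2 * 2 ^ (j + 1) := by ring
    rw [hp]
    linarith
  -- main estimate
  have hmain : ∑ j ∈ Finset.Icc j0 N, ((2 : ℝ) ^ (2 * j))⁻¹ * M j ^ 2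
      ≤ ∑ j ∈ Finset.Icc j0 N, ((2 : ℝ) ^ (2 * j))⁻¹ * (2 * M j0 ^ 2 + 2 ^ (j + 2) * T j) := by
    refine Finset.sum_le_sum fun j hj => ?_
    exact mul_le_mul_of_nonneg_left (hMsq j hj) (by positivity)
  have hsplit : ∑ j ∈ Finset.Icc j0 N, ((2 : ℝ) ^ (2 * j))⁻¹ * (2 * M j0 ^ 2 + 2 ^ (j + 2) * T j)
      = (∑ j ∈ Finset.Icc j0 N, ((2 : ℝ) ^ (2 * j))⁻¹ * (2 * M j0 ^ 2))
        + ∑ j ∈ Finset.Icc j0 N, ((2 : ℝ) ^ (2 * j))⁻¹ * (2 ^ (j + 2) * T j) := by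
    rw [← Finset.sum_add_distrib]
    exact Finset.sum_congr rfl fun j _ => by ring
  -- Part A
  have hA : ∑ j ∈ Finset.Icc j0 N, ((2 : ℝ) ^ (2 * j))⁻¹ * (2 * M j0 ^ 2)
      ≤ (8 / 3) * δ0 ^ 2 := by
    have h4 : ∀ j : ℕ, ((2 : ℝ) ^ (2 * j))⁻¹ = ((4 : ℝ)⁻¹) ^ j := by
      intro j
      rw [pow_mul, inv_pow]
      norm_num
    have hfac : ∑ j ∈ Finset.Icc j0 N, ((2 : ℝ) ^ (2 * j))⁻¹ * (2 * M j0 ^ 2)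
        = (2 * M j0 ^ 2) * ∑ j ∈ Finset.Icc j0 N, ((4 : ℝ)⁻¹) ^ j := by
      rw [Finset.mul_sum]
      exact Finset.sum_congr rfl fun j _ => by rw [h4]; ring
    rw [hfac]
    have hg := geom_tail_le (r := (4 : ℝ)⁻¹) (by norm_num) (by norm_num) j0 N
    have hMsq0 : M j0 ^ 2 ≤ δ0 ^ 2 * (4 : ℝ) ^ j0 := by
      have h1 : M j0 ^ 2 ≤ (δ0 * 2 ^ j0) ^ 2 := by
        have := hMnn j0
        nlinarith
      have h2 : (δ0 * (2 : ℝ) ^ j0) ^ 2 = δ0 ^ 2 * (4 : ℝ) ^ j0 := by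
        rw [mul_pow, ← pow_mul, mul_comm j0 2, pow_mul]
        norm_num
      linarith [h2 ▸ h1]
    have hgn : (0 : ℝ) ≤ ∑ j ∈ Finset.Icc j0 N, ((4 : ℝ)⁻¹) ^ j :=
      Finset.sum_nonneg fun j _ => by positivity
    have hMn : (0 : ℝ) ≤ 2 * M j0 ^ 2 := by positivity
    have hcancel : ((4 : ℝ)⁻¹) ^ j0 * (4 : ℝ) ^ j0 = 1 := by
      rw [← mul_pow]; norm_num
    calc (2 * M j0 ^ 2) * ∑ j ∈ Finset.Icc j0 N, ((4 : ℝ)⁻¹) ^ j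
        ≤ (2 * (δ0 ^ 2 * (4 : ℝ) ^ j0)) * (((4 : ℝ)⁻¹) ^ j0 / (1 - (4 : ℝ)⁻¹)) := by
          apply mul_le_mul (by linarith) hg hgn (by positivity)
      _ = (8 / 3) * δ0 ^ 2 * (((4 : ℝ)⁻¹) ^ j0 * (4 : ℝ) ^ j0) := by
          rw [div_eq_mul_inv]; norm_num; ring
      _ = (8 / 3) * δ0 ^ 2 := by rw [hcancel, mul_one]
  -- Part B
  have hB : ∑ j ∈ Finset.Icc j0 N, ((2 : ℝ) ^ (2 * j))⁻¹ * (2 ^ (j + 2) * T j)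
      ≤ 96 * δ0 ^ 2 := by
    have hcoef : ∀ j : ℕ, ((2 : ℝ) ^ (2 * j))⁻¹ * (2 : ℝ) ^ (j + 2) = 4 * ((2 : ℝ)⁻¹) ^ j := by
      intro j
      have hne : ((2 : ℝ) ^ j) ≠ 0 := by positivity
      rw [two_mul, pow_add, pow_add, inv_pow]
      field_simp
      ring
    have hstep1 : ∑ j ∈ Finset.Icc j0 N, ((2 : ℝ) ^ (2 * j))⁻¹ * (2 ^ (j + 2) * T j)
        = 4 * ∑ j ∈ Finset.Icc j0 N, ∑ k ∈ Finset.Icc j0 j,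
            ((2 : ℝ)⁻¹) ^ j * ((2 : ℝ) ^ k * J k ^ 2) := by
      rw [Finset.mul_sum]
      refine Finset.sum_congr rfl fun j _ => ?_
      rw [← mul_assoc, hcoef j, hTdef]
      simp only
      rw [Finset.mul_sum, Finset.mul_sum]
      refine Finset.sum_congr rfl fun k _ => by ring
    rw [hstep1]
    -- interchange the double sum
    have hswap : ∑ j ∈ Finset.Icc j0 N, ∑ k ∈ Finset.Icc j0 j,
          ((2 : ℝ)⁻¹) ^ j * ((2 : ℝ) ^ k * J k ^ 2)
        = ∑ k ∈ Finset.Icc j0 N, ∑ j ∈ Finset.Icc k N,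
          ((2 : ℝ)⁻¹) ^ j * ((2 : ℝ) ^ k * J k ^ 2) := by
      have h := Finset.sum_Ico_Ico_comm j0 (N + 1)
        (fun k j => ((2 : ℝ)⁻¹) ^ j * ((2 : ℝ) ^ k * J k ^ 2))
      -- h : ∑ k in Ico j0 (N+1), ∑ j in Ico k (N+1), f k j
      --   = ∑ j in Ico j0 (N+1), ∑ k in Ico j0 (j+1), f k j
      rw [← Finset.Ico_add_one_right_eq_Icc]
      calc ∑ j ∈ Finset.Ico j0 (N + 1), ∑ k ∈ Finset.Icc j0 j,
              ((2 : ℝ)⁻¹) ^ j * ((2 : ℝ) ^ k * J k ^ 2)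
          = ∑ j ∈ Finset.Ico j0 (N + 1), ∑ k ∈ Finset.Ico j0 (j + 1),
              ((2 : ℝ)⁻¹) ^ j * ((2 : ℝ) ^ k * J k ^ 2) := by
            refine Finset.sum_congr rfl fun j _ => ?_
            rw [Finset.Ico_add_one_right_eq_Icc]
        _ = ∑ k ∈ Finset.Ico j0 (N + 1), ∑ j ∈ Finset.Ico k (N + 1),
              ((2 : ℝ)⁻¹) ^ j * ((2 : ℝ) ^ k * J k ^ 2) := h.symm
        _ = ∑ k ∈ Finset.Ico j0 (N + 1), ∑ j ∈ Finset.Icc k N,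
              ((2 : ℝ)⁻¹) ^ j * ((2 : ℝ) ^ k * J k ^ 2) := by
            refine Finset.sum_congr rfl fun k _ => ?_
            rw [Finset.Ico_add_one_right_eq_Icc]
    rw [hswap]
    have hinner : ∀ k ∈ Finset.Icc j0 N,
        ∑ j ∈ Finset.Icc k N, ((2 : ℝ)⁻¹) ^ j * ((2 : ℝ) ^ k * J k ^ 2)
          ≤ 2 * J k ^ 2 := by
      intro k _
      have hfac : ∑ j ∈ Finset.Icc k N, ((2 : ℝ)⁻¹) ^ j * ((2 : ℝ) ^ k * J k ^ 2)
          = ((2 : ℝ) ^ k * J k ^ 2) * ∑ j ∈ Finset.Icc k N, ((2 : ℝ)⁻¹) ^ j := by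
        rw [Finset.mul_sum]
        exact Finset.sum_congr rfl fun j _ => by ring
      rw [hfac]
      have hg := geom_tail_le (r := (2 : ℝ)⁻¹) (by norm_num) (by norm_num) k N
      have hcn : (0 : ℝ) ≤ (2 : ℝ) ^ k * J k ^ 2 := mul_nonneg (by positivity) (sq_nonneg _)
      calc ((2 : ℝ) ^ k * J k ^ 2) * ∑ j ∈ Finset.Icc k N, ((2 : ℝ)⁻¹) ^ j
          ≤ ((2 : ℝ) ^ k * J k ^ 2) * (((2 : ℝ)⁻¹) ^ k / (1 - (2 : ℝ)⁻¹)) :=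
            mul_le_mul_of_nonneg_left hg hcn
        _ = 2 * J k ^ 2 * ((2 : ℝ) ^ k * ((2 : ℝ)⁻¹) ^ k) := by
            rw [div_eq_mul_inv]; norm_num; ring
        _ = 2 * J k ^ 2 := by
            rw [← mul_pow]; norm_num
    have hsum2 : ∑ k ∈ Finset.Icc j0 N,
        (∑ j ∈ Finset.Icc k N, ((2 : ℝ)⁻¹) ^ j * ((2 : ℝ) ^ k * J k ^ 2))
        ≤ ∑ k ∈ Finset.Icc j0 N, 2 * J k ^ 2 := Finset.sum_le_sum hinner
    have hfin : ∑ k ∈ Finset.Icc j0 N, 2 * J k ^ 2 ≤ 24 * δ0 ^ 2 := by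
      rw [← Finset.mul_sum]
      linarith
    linarith
  calc ∑ j ∈ Finset.Icc j0 N, ((2 : ℝ) ^ (2 * j))⁻¹ * M j ^ 2
      ≤ (∑ j ∈ Finset.Icc j0 N, ((2 : ℝ) ^ (2 * j))⁻¹ * (2 * M j0 ^ 2))
        + ∑ j ∈ Finset.Icc j0 N, ((2 : ℝ) ^ (2 * j))⁻¹ * (2 ^ (j + 2) * T j) := by
        rw [← hsplit]; exact hmain
    _ ≤ (8 / 3) * δ0 ^ 2 + 96 * δ0 ^ 2 := add_le_add hA hB
    _ ≤ 100 * δ0 ^ 2 := by nlinarith [sq_nonneg δ0]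
end

section
/- Let $g(x,y) = a e^{(x+iy)/s} + b e^{-(x+iy)/s}$ on the cylinder $C = (-L,L) \times (\mathbb{R}/2\pi s\mathbb{Z})$ with $a,b \in \mathbb{C}$. Then $\left| \langle \mathrm{Im}(a e^{(x+iy)/s}), \mathrm{Im}(b e^{-(x+iy)/s}) \rangle_{L^2(C)} \right| \le \frac{2L}{s\,\sinh(2L/s)} \, \|\mathrm{Im}(a e^{(x+iy)/s})\|_{L^2(C)} \cdot \|\mathrm{Im}(b e^{-(x+iy)/s})\|_{L^2(C)}$, and in particular the correlation tends to $0$ as $L/s \to \infty$. -/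
open MeasureTheory Real

lemma ioo_eq_interval (A B : ℝ) (h : A ≤ B) (f : ℝ → ℝ) :
    ∫ x in Set.Ioo A B, f x = ∫ x in A..B, f x := by
  rw [intervalIntegral.integral_of_le h, integral_Ioc_eq_integral_Ioo]

lemma int_exp_div (c A B : ℝ) (hc : c ≠ 0) :
    ∫ x in A..B, Real.exp (x / c) = c * (Real.exp (B / c) - Real.exp (A / c)) := by
  rw [intervalIntegral.integral_comp_div (f := Real.exp) hc, integral_exp]
  simp [smul_eq_mul]

lemma exp_decomp (s x y : ℝ) (hs : s ≠ 0) :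
    Complex.exp (((x : ℂ) + Complex.I * (y : ℂ)) / (s : ℂ)) =
      (Real.exp (x / s) : ℂ) * ((Real.cos (y / s) : ℂ) + (Real.sin (y / s) : ℂ) * Complex.I) := by
  have h : ((x : ℂ) + Complex.I * (y : ℂ)) / (s : ℂ) =
      ((x / s : ℝ) : ℂ) + ((y / s : ℝ) : ℂ) * Complex.I := by
    have : (s : ℂ) ≠ 0 := by exact_mod_cast hs
    push_cast
    ring
  rw [h, Complex.exp_add, Complex.exp_mul_I]
  push_cast
  simp

lemma im_mul_decomp (a : ℂ) (r c sn : ℝ) :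
    (a * ((r : ℂ) * ((c : ℂ) + (sn : ℂ) * Complex.I))).im = r * (a.re * sn + a.im * c) := by
  simp [Complex.mul_im, Complex.mul_re]
  ring

lemma trig_int (s : ℝ) (hs : 0 < s) (c1 c2 c3 : ℝ) :
    ∫ y in Set.Ioo 0 (2 * π * s),
      (c1 * Real.sin (y / s) ^ 2 + c2 * (Real.sin (y / s) * Real.cos (y / s))
        + c3 * Real.cos (y / s) ^ 2)
      = s * π * (c1 + c3) := by
  have hπ : (0:ℝ) < π := Real.pi_pos
  rw [ioo_eq_interval _ _ (by positivity)]
  rw [intervalIntegral.integral_comp_div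
    (f := fun t => c1 * Real.sin t ^ 2 + c2 * (Real.sin t * Real.cos t) + c3 * Real.cos t ^ 2)
    hs.ne']
  rw [show (0:ℝ) / s = 0 by simp, show 2 * π * s / s = 2 * π by field_simp]
  have hi1 : IntervalIntegrable (fun t => c1 * Real.sin t ^ 2) volume 0 (2 * π) :=
    (by continuity : Continuous fun t => c1 * Real.sin t ^ 2).intervalIntegrable _ _
  have hi2 : IntervalIntegrable (fun t => c2 * (Real.sin t * Real.cos t)) volume 0 (2 * π) :=
    (by continuity : Continuous fun t => c2 * (Real.sin t * Real.cos t)).intervalIntegrable _ _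
  have hi3 : IntervalIntegrable (fun t => c3 * Real.cos t ^ 2) volume 0 (2 * π) :=
    (by continuity : Continuous fun t => c3 * Real.cos t ^ 2).intervalIntegrable _ _
  rw [intervalIntegral.integral_add (hi1.add hi2) hi3, intervalIntegral.integral_add hi1 hi2,
    intervalIntegral.integral_const_mul, intervalIntegral.integral_const_mul,
    intervalIntegral.integral_const_mul, integral_sin_sq, integral_cos_sq,
    integral_sin_mul_cos₁]
  simp [Real.sin_two_pi, Real.cos_two_pi, smul_eq_mul]
  ring

lemma prod_split (L T : ℝ) (f g : ℝ → ℝ) (F : ℝ × ℝ → ℝ)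
    (hF : ∀ p : ℝ × ℝ, F p = f p.1 * g p.2) :
    ∫ p in Set.Ioo (-L) L ×ˢ Set.Ioo 0 T, F p ∂volume
      = (∫ x in Set.Ioo (-L) L, f x) * ∫ y in Set.Ioo 0 T, g y := by
  rw [Measure.volume_eq_prod, ← setIntegral_prod_mul]
  exact integral_congr_ae (Filter.Eventually.of_forall hF)

/-- Near-orthogonality of the imaginary parts of the modes `z` and `z⁻¹` on a
long flat cylinder: the correlation is at most `2L/(s·sinh(2L/s))`, which tends
to `0` as `L/s → ∞`. -/
theorem stmt_9 (s L : ℝ) (hs : 0 < s) (hL : 0 < L)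
    (D : Set (ℝ × ℝ)) (hD : D = Set.Ioo (-L) L ×ˢ Set.Ioo 0 (2 * π * s))
    (a b : ℂ)
    (u v : ℝ × ℝ → ℝ)
    (hu : ∀ p, u p = (a * Complex.exp (((p.1 : ℂ) + Complex.I * (p.2 : ℂ)) / (s : ℂ))).im)
    (hv : ∀ p, v p = (b * Complex.exp (-(((p.1 : ℂ) + Complex.I * (p.2 : ℂ)) / (s : ℂ)))).im) :
    |∫ p in D, u p * v p ∂volume| ≤
      (2 * L / (s * Real.sinh (2 * L / s))) *
        (Real.sqrt (∫ p in D, (u p) ^ 2 ∂volume) *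
          Real.sqrt (∫ p in D, (v p) ^ 2 ∂volume)) := by
  have hπ : (0:ℝ) < π := Real.pi_pos
  have hsne : s ≠ 0 := hs.ne'
  have hS : 0 < Real.sinh (2 * L / s) := Real.sinh_pos_iff.mpr (by positivity)
  -- pointwise forms
  have hu' : ∀ p : ℝ × ℝ,
      u p = Real.exp (p.1 / s) * (a.re * Real.sin (p.2 / s) + a.im * Real.cos (p.2 / s)) := by
    intro p
    rw [hu, exp_decomp s p.1 p.2 hsne, im_mul_decomp]
  have hv' : ∀ p : ℝ × ℝ,
      v p = Real.exp (-p.1 / s) * (b.im * Real.cos (p.2 / s) - b.re * Real.sin (p.2 / s)) := by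
    intro p
    rw [hv]
    have h : -(((p.1 : ℂ) + Complex.I * (p.2 : ℂ)) / (s : ℂ))
        = (((-p.1 : ℝ) : ℂ) + Complex.I * ((-p.2 : ℝ) : ℂ)) / (s : ℂ) := by
      push_cast; ring
    rw [h, exp_decomp s (-p.1) (-p.2) hsne, im_mul_decomp]
    simp [neg_div, Real.sin_neg, Real.cos_neg]
    ring
  -- the three integrals
  have hIuv : ∫ p in D, u p * v p ∂volume
      = (2 * L) * (s * π * (-(a.re * b.re) + a.im * b.im)) := by
    rw [hD, prod_split L (2 * π * s) (fun _ => (1:ℝ))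
      (fun y => (-(a.re * b.re)) * Real.sin (y / s) ^ 2
        + (a.re * b.im - a.im * b.re) * (Real.sin (y / s) * Real.cos (y / s))
        + (a.im * b.im) * Real.cos (y / s) ^ 2)
      (fun p => u p * v p) ?_]
    · have h2L : ∫ _x in Set.Ioo (-L) L, (1:ℝ) = 2 * L := by
        rw [setIntegral_const, Real.volume_real_Ioo_of_le (by linarith), smul_eq_mul, mul_one,
          show L - (-L) = 2 * L by ring]
      rw [trig_int s hs, h2L]
    · intro p
      rw [hu' p, hv' p]
      have he : Real.exp (p.1 / s) * Real.exp (-p.1 / s) = 1 := by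
        rw [← Real.exp_add]; simp [neg_div]
      calc Real.exp (p.1 / s) * (a.re * Real.sin (p.2 / s) + a.im * Real.cos (p.2 / s)) *
            (Real.exp (-p.1 / s) * (b.im * Real.cos (p.2 / s) - b.re * Real.sin (p.2 / s)))
          = (Real.exp (p.1 / s) * Real.exp (-p.1 / s)) *
            ((a.re * Real.sin (p.2 / s) + a.im * Real.cos (p.2 / s)) *
             (b.im * Real.cos (p.2 / s) - b.re * Real.sin (p.2 / s))) := by ring
        _ = _ := by rw [he]; ring
  have hexu : ∫ x in Set.Ioo (-L) L, Real.exp (x / (s / 2)) = s * Real.sinh (2 * L / s) := by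
    rw [ioo_eq_interval _ _ (by linarith), int_exp_div (s / 2) (-L) L (div_ne_zero hsne two_ne_zero)]
    rw [Real.sinh_eq, show L / (s / 2) = 2 * L / s by rw [div_div_eq_mul_div]; ring,
      show -L / (s / 2) = -(2 * L / s) by rw [div_div_eq_mul_div]; ring]
    ring
  have hexv : ∫ x in Set.Ioo (-L) L, Real.exp (x / (-(s / 2))) = s * Real.sinh (2 * L / s) := by
    rw [ioo_eq_interval _ _ (by linarith), int_exp_div (-(s / 2)) (-L) L (neg_ne_zero.mpr (div_ne_zero hsne two_ne_zero))]
    rw [Real.sinh_eq, show L / (-(s / 2)) = -(2 * L / s) by rw [div_neg, div_div_eq_mul_div]; ring,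
      show -L / (-(s / 2)) = 2 * L / s by rw [div_neg, div_div_eq_mul_div]; ring]
    ring
  have hIu : ∫ p in D, (u p) ^ 2 ∂volume
      = (s * Real.sinh (2 * L / s)) * (s * π * (a.re ^ 2 + a.im ^ 2)) := by
    rw [hD, prod_split L (2 * π * s) (fun x => Real.exp (x / (s / 2)))
      (fun y => (a.re ^ 2) * Real.sin (y / s) ^ 2
        + (2 * a.re * a.im) * (Real.sin (y / s) * Real.cos (y / s))
        + (a.im ^ 2) * Real.cos (y / s) ^ 2)
      (fun p => (u p) ^ 2) ?_]
    · rw [trig_int s hs, hexu]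
    · intro p
      rw [hu' p]
      have he : Real.exp (p.1 / s) * Real.exp (p.1 / s) = Real.exp (p.1 / (s / 2)) := by
        rw [← Real.exp_add, div_div_eq_mul_div]; congr 1; ring
      calc (Real.exp (p.1 / s) * (a.re * Real.sin (p.2 / s) + a.im * Real.cos (p.2 / s))) ^ 2
          = (Real.exp (p.1 / s) * Real.exp (p.1 / s)) *
            ((a.re * Real.sin (p.2 / s) + a.im * Real.cos (p.2 / s)) ^ 2) := by ring
        _ = _ := by rw [he]; ring
  have hIv : ∫ p in D, (v p) ^ 2 ∂volume
      = (s * Real.sinh (2 * L / s)) * (s * π * (b.re ^ 2 + b.im ^ 2)) := by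
    rw [hD, prod_split L (2 * π * s) (fun x => Real.exp (x / (-(s / 2))))
      (fun y => (b.re ^ 2) * Real.sin (y / s) ^ 2
        + (-(2 * b.re * b.im)) * (Real.sin (y / s) * Real.cos (y / s))
        + (b.im ^ 2) * Real.cos (y / s) ^ 2)
      (fun p => (v p) ^ 2) ?_]
    · rw [trig_int s hs, hexv]
    · intro p
      rw [hv' p]
      have he : Real.exp (-p.1 / s) * Real.exp (-p.1 / s) = Real.exp (p.1 / (-(s / 2))) := by
        rw [← Real.exp_add, div_neg, div_div_eq_mul_div]; congr 1; ring
      calc (Real.exp (-p.1 / s) * (b.im * Real.cos (p.2 / s) - b.re * Real.sin (p.2 / s))) ^ 2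
          = (Real.exp (-p.1 / s) * Real.exp (-p.1 / s)) *
            ((b.im * Real.cos (p.2 / s) - b.re * Real.sin (p.2 / s)) ^ 2) := by ring
        _ = _ := by rw [he]; ring
  -- assemble
  rw [hIuv, hIu, hIv]
  have hA : (0:ℝ) ≤ a.re ^ 2 + a.im ^ 2 := by positivity
  have hB : (0:ℝ) ≤ b.re ^ 2 + b.im ^ 2 := by positivity
  set K : ℝ := (s * Real.sinh (2 * L / s)) * (s * π) with hK
  have hKpos : 0 < K := by rw [hK]; exact mul_pos (mul_pos hs hS) (mul_pos hs hπ)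
  have hsq : Real.sqrt (K * (a.re ^ 2 + a.im ^ 2)) * Real.sqrt (K * (b.re ^ 2 + b.im ^ 2))
      = K * Real.sqrt ((a.re ^ 2 + a.im ^ 2) * (b.re ^ 2 + b.im ^ 2)) := by
    rw [← Real.sqrt_mul (mul_nonneg hKpos.le hA),
      show K * (a.re ^ 2 + a.im ^ 2) * (K * (b.re ^ 2 + b.im ^ 2))
        = K ^ 2 * ((a.re ^ 2 + a.im ^ 2) * (b.re ^ 2 + b.im ^ 2)) by ring,
      Real.sqrt_mul (sq_nonneg K), Real.sqrt_sq hKpos.le]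
  have harr : (s * Real.sinh (2 * L / s)) * (s * π * (a.re ^ 2 + a.im ^ 2))
      = K * (a.re ^ 2 + a.im ^ 2) := by rw [hK]; ring
  have hbrr : (s * Real.sinh (2 * L / s)) * (s * π * (b.re ^ 2 + b.im ^ 2))
      = K * (b.re ^ 2 + b.im ^ 2) := by rw [hK]; ring
  rw [harr, hbrr, hsq]
  have hCS : |(-(a.re * b.re) + a.im * b.im)|
      ≤ Real.sqrt ((a.re ^ 2 + a.im ^ 2) * (b.re ^ 2 + b.im ^ 2)) := by
    have h1 : (-(a.re * b.re) + a.im * b.im) ^ 2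
        ≤ (a.re ^ 2 + a.im ^ 2) * (b.re ^ 2 + b.im ^ 2) := by
      nlinarith [sq_nonneg (a.re * b.im + a.im * b.re)]
    have := Real.sqrt_le_sqrt h1
    rwa [Real.sqrt_sq_eq_abs] at this
  have hRHS : (2 * L / (s * Real.sinh (2 * L / s))) *
      (K * Real.sqrt ((a.re ^ 2 + a.im ^ 2) * (b.re ^ 2 + b.im ^ 2)))
      = (2 * L * (s * π)) * Real.sqrt ((a.re ^ 2 + a.im ^ 2) * (b.re ^ 2 + b.im ^ 2)) := by
    rw [hK]; field_simp
  rw [hRHS]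
  have hLHS : |2 * L * (s * π * (-(a.re * b.re) + a.im * b.im))|
      = (2 * L * (s * π)) * |(-(a.re * b.re) + a.im * b.im)| := by
    rw [show 2 * L * (s * π * (-(a.re * b.re) + a.im * b.im))
        = (2 * L * (s * π)) * (-(a.re * b.re) + a.im * b.im) by ring,
      abs_mul, abs_of_pos (by positivity : (0:ℝ) < 2 * L * (s * π))]
  rw [hLHS]
  exact mul_le_mul_of_nonneg_left hCS (by positivity)
end
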